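/- Let c' > 3 and let u, w be integers with u + c' + 2 ≤ w ≤ u + 2c' and w − u ≡ 2c' (mod 3). Set ε ∈ {1,2} so that w − u − c' − ε − 1 is even. Then the walk in ℤ (viewing vertices as integers in I(u,w) = {u, u+1, ..., w}) given by u+1 →(+2)... → w−c'−ε →(+3)... → u+c'−ε+3 →(+2)... → w →(−c') w−c' →(+3)... → u+c' →(−c') u →(+2)... → w−c'+ε−3 →(+3)... → u+c'+ε →(+2)... → w−1, using only steps +2, +3, and −c', visits every element of I(u,w) exactly once. -/

import Mathlib

/-- `seg a s k` is the arithmetic progression a, a + s, ..., a + s(k−1):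
the vertices of a walk of k − 1 steps of size s starting at a, omitting the
final endpoint a + s·k (which starts the next segment of the walk). -/
def seg (a s : ℤ) (k : ℕ) : List ℤ := (List.range k).map fun i => a + s * i

lemma seg_eq (a s : ℤ) (k : ℕ) : seg a s k = (List.range k).map (fun i : ℕ => a + s * (i:ℤ)) := by
  simp [seg]
  rw [← List.map_eq_flatMap, List.map_map]
  rfl

lemma seg_mem {a s z : ℤ} {k : ℕ} : z ∈ seg a s k ↔ ∃ i : ℕ, i < k ∧ z = a + s * i := by
  rw [seg_eq]
  constructor
  · intro h
    rw [List.mem_map] at h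
    obtain ⟨i, hi, he⟩ := h
    exact ⟨i, List.mem_range.mp hi, he.symm⟩
  · rintro ⟨i, h1, rfl⟩
    exact List.mem_map.mpr ⟨i, List.mem_range.mpr h1, rfl⟩

lemma seg_mem_two {a z : ℤ} {k : ℕ} : z ∈ seg a 2 k ↔ a ≤ z ∧ z < a + 2 * k ∧ 2 ∣ z - a := by
  rw [seg_mem]
  constructor
  · rintro ⟨i, h1, rfl⟩; omega
  · rintro h; exact ⟨((z - a) / 2).toNat, by omega, by omega⟩

lemma seg_mem_three {a z : ℤ} {k : ℕ} : z ∈ seg a 3 k ↔ a ≤ z ∧ z < a + 3 * k ∧ 3 ∣ z - a := by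
  rw [seg_mem]
  constructor
  · rintro ⟨i, h1, rfl⟩; omega
  · rintro h; exact ⟨((z - a) / 3).toNat, by omega, by omega⟩

lemma seg_nodup {a s : ℤ} {k : ℕ} (hs : s ≠ 0) : (seg a s k).Nodup := by
  rw [seg_eq]
  refine List.Nodup.map ?_ List.nodup_range
  intro i j h
  have h2 : s * (i : ℤ) = s * j := by
    have := h
    simp only [] at this
    linarith [this]
  have h3 : (i : ℤ) = j := mul_left_cancel₀ hs h2
  exact_mod_cast h3

lemma seg_zero {a s : ℤ} : seg a s 0 = [] := by rw [seg_eq]; rfl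

lemma seg_one {a s : ℤ} : seg a s 1 = [a] := by
  rw [seg_eq, show List.range 1 = [0] from rfl, List.map_singleton]
  norm_num

lemma seg_succ {a s : ℤ} {k : ℕ} : seg a s (k + 1) = a :: seg (a + s) s k := by
  rw [seg_eq, seg_eq, List.range_succ_eq_map, List.map_cons, List.map_map]
  simp only [Nat.cast_zero, mul_zero, add_zero]
  congr 1
  apply List.map_congr_left
  intro i _
  simp only [Function.comp_apply, Nat.succ_eq_add_one]
  push_cast
  ring

lemma seg_concat {a s : ℤ} {k : ℕ} : seg a s (k + 1) = seg a s k ++ [a + s * k] := by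
  rw [seg_eq, seg_eq, List.range_succ, List.map_append]
  rfl

lemma seg_head {a s x : ℤ} {k : ℕ} (h : x ∈ (seg a s k).head?) : x = a := by
  cases k with
  | zero => simp [seg_zero] at h
  | succ k => rw [seg_succ] at h; simp at h; omega

lemma seg_getLast {a s x : ℤ} {k : ℕ} (h : x ∈ (seg a s (k + 1)).getLast?) : x = a + s * k := by
  rw [seg_concat, List.getLast?_concat] at h
  simp at h; omega

lemma seg_chain' {R : ℤ → ℤ → Prop} {s : ℤ} (h : ∀ x, R x (x + s)) :
    ∀ (k : ℕ) (a : ℤ), List.Chain' R (seg a s k) := by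
  intro k
  induction k with
  | zero => intro a; simp [seg_zero]; exact List.isChain_nil
  | succ k ih =>
    intro a
    rw [seg_succ]; show List.IsChain R _; rw [List.isChain_cons]
    refine ⟨fun y hy => ?_, ih (a + s)⟩
    rw [seg_head hy]; exact h a

def segs : ℤ → List (ℤ × ℕ) → List ℤ
  | _, [] => []
  | a, p :: ps => seg a p.1 p.2 ++ segs (a + p.1 * p.2) ps

lemma segs_head : ∀ (ps : List (ℤ × ℕ)) (a x : ℤ), x ∈ (segs a ps).head? → x = a := by
  intro ps
  induction ps with
  | nil => intro a x h; simp [segs] at h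
  | cons p ps ih =>
    intro a x h
    rw [segs] at h
    rcases p with ⟨s, k⟩
    cases k with
    | zero =>
      rw [seg_zero, List.nil_append] at h
      have := ih _ _ h
      simpa using this
    | succ k =>
      rw [seg_succ, List.cons_append] at h
      simp at h; omega

lemma segs_chain' {R : ℤ → ℤ → Prop} :
    ∀ (ps : List (ℤ × ℕ)) (a : ℤ), (∀ p ∈ ps, ∀ x : ℤ, R x (x + p.1)) →
      List.Chain' R (segs a ps) := by
  intro ps
  induction ps with
  | nil => intro a _; simp [segs]; exact List.isChain_nil
  | cons p ps ih =>
    intro a hR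
    rw [segs]
    refine List.IsChain.append (seg_chain' (hR p (by simp)) _ _)
      (ih _ fun q hq => hR q (by simp [hq])) ?_
    intro x hx y hy
    rcases p with ⟨s, k⟩
    cases k with
    | zero => rw [seg_zero] at hx; simp at hx
    | succ k =>
      have hx' := seg_getLast hx
      have hy' := segs_head _ _ _ hy
      have hyx : y = x + s := by
        rw [hx', hy']; push_cast; ring
      rw [hyx]; exact hR ⟨s, k + 1⟩ (by simp) x

lemma seg_length {a s : ℤ} {k : ℕ} : (seg a s k).length = k := by
  rw [seg_eq]; simp

lemma appc {l1 l1' l2 l2' : List ℤ} (h1 : l1 = l1') (h2 : l2 = l2') :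
    l1 ++ l2 = l1' ++ l2' := by rw [h1, h2]

lemma segc {a a' s : ℤ} {k : ℕ} (h : a = a') : seg a s k = seg a' s k := by rw [h]

lemma singc {a a' : ℤ} (h : a = a') : [a] = [a'] := by rw [h]

set_option maxHeartbeats 2000000 in
/-- Lemma 7 of the paper, case w − u ≡ 2c' (mod 3): with c' > 3,
u + c' + 2 ≤ w ≤ u + 2c', and ε ∈ {1, 2} chosen so that w − u − c' − ε − 1 is
even, the explicit walk
u+1 →(+2)… → w−c'−ε →(+3)… → u+c'−ε+3 →(+2)… → w →(−c') w−c' →(+3)… → u+c'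
→(−c') u →(+2)… → w−c'+ε−3 →(+3)… → u+c'+ε →(+2)… → w−1,
using only steps +2, +3 and −c', visits every element of
I(u,w) = {u, u+1, …, w} exactly once. -/
theorem stmt_12 (c' u w ε : ℤ) (hc' : 3 < c')
    (h1 : u + c' + 2 ≤ w) (h2 : w ≤ u + 2 * c')
    (h3 : (w - u) % 3 = (2 * c') % 3)
    (hε : ε = 1 ∨ ε = 2) (hpar : 2 ∣ (w - u - c' - ε - 1))
    (L : List ℤ)
    (hL : L =
      seg (u + 1) 2 ((w - c' - ε - (u + 1)) / 2).toNat ++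
      seg (w - c' - ε) 3 ((u + 2 * c' + 3 - w) / 3).toNat ++
      seg (u + c' - ε + 3) 2 ((w - (u + c' - ε + 3)) / 2).toNat ++
      [w] ++
      seg (w - c') 3 ((u + 2 * c' - w) / 3).toNat ++
      [u + c'] ++
      seg u 2 ((w - c' + ε - 3 - u) / 2).toNat ++
      seg (w - c' + ε - 3) 3 ((u + 2 * c' + 3 - w) / 3).toNat ++
      seg (u + c' + ε) 2 ((w - 1 - (u + c' + ε)) / 2).toNat ++
      [w - 1]) :
    L.Chain' (fun a b => b - a ∈ ({2, 3, -c'} : Set ℤ)) ∧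
    L.Nodup ∧
    ∀ z : ℤ, z ∈ L ↔ u ≤ z ∧ z ≤ w := by
  obtain ⟨a, ha⟩ : ∃ a : ℕ, 2 * (a : ℤ) = w - u - c' - ε - 1 :=
    ⟨((w - u - c' - ε - 1) / 2).toNat, by omega⟩
  obtain ⟨b, hb⟩ : ∃ b : ℕ, 3 * (b : ℤ) = u + 2 * c' - w :=
    ⟨((u + 2 * c' - w) / 3).toNat, by omega⟩
  obtain ⟨c, hc⟩ : ∃ c : ℕ, (c : ℤ) = (a : ℤ) + ε - 1 :=
    ⟨((a : ℤ) + ε - 1).toNat, by omega⟩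
  have e1 : ((w - c' - ε - (u + 1)) / 2).toNat = a := by omega
  have e2 : ((u + 2 * c' + 3 - w) / 3).toNat = b + 1 := by omega
  have e3 : ((w - (u + c' - ε + 3)) / 2).toNat = c := by omega
  have e4 : ((u + 2 * c' - w) / 3).toNat = b := by omega
  have e5 : ((w - c' + ε - 3 - u) / 2).toNat = c := by omega
  have e6 : ((w - 1 - (u + c' + ε)) / 2).toNat = a := by omega
  rw [e1, e2, e3, e4, e5, e6] at hL
  subst hL
  clear e1 e2 e3 e4 e5 e6 h3 hpar
  have hnd : (seg (u + 1) 2 a ++ seg (w - c' - ε) 3 (b + 1) ++ seg (u + c' - ε + 3) 2 c ++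
      [w] ++ seg (w - c') 3 b ++ [u + c'] ++ seg u 2 c ++
      seg (w - c' + ε - 3) 3 (b + 1) ++ seg (u + c' + ε) 2 a ++ [w - 1]).Nodup := by
    simp only [List.append_assoc, List.nodup_append, List.disjoint_append_right]
    repeat' apply And.intro
    all_goals first
      | exact seg_nodup (by norm_num)
      | exact List.nodup_singleton _
      | (intro z hz y hz' hzy
         subst hzy
         simp only [seg_mem_two, seg_mem_three, List.mem_singleton, List.mem_append] at hz hz'
         omega)
  refine ⟨?_, hnd, ?_⟩
  · -- Chain'
    have hL' : (seg (u + 1) 2 a ++ seg (w - c' - ε) 3 (b + 1) ++ seg (u + c' - ε + 3) 2 c ++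
        [w] ++ seg (w - c') 3 b ++ [u + c'] ++ seg u 2 c ++
        seg (w - c' + ε - 3) 3 (b + 1) ++ seg (u + c' + ε) 2 a ++ [w - 1]) = segs (u + 1)
        [(2, a), (3, b + 1), (2, c), (-c', 1), (3, b), (-c', 1),
         (2, c), (3, b + 1), (2, a), (2, 1)] := by
      simp only [segs, seg_one, List.append_nil, List.append_assoc]
      refine appc rfl (appc (segc (by push_cast; omega)) (appc (segc (by push_cast; omega))
        (appc (singc (by push_cast; omega))
        (appc (segc (by push_cast; omega)) (appc (singc (by push_cast; omega))
        (appc (segc (by push_cast; omega))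
        (appc (segc (by push_cast; omega)) (appc (segc (by push_cast; omega))
        (singc (by push_cast; omega))))))))))
    rw [hL']
    apply segs_chain'
    intro p hp x
    simp only [List.mem_cons, List.not_mem_nil, or_false] at hp
    rcases hp with rfl | rfl | rfl | rfl | rfl | rfl | rfl | rfl | rfl | rfl <;>
      simp only [Set.mem_insert_iff, Set.mem_singleton_iff] <;> omega
  · -- membership
    have hfwd : ∀ z : ℤ, z ∈ (seg (u + 1) 2 a ++ seg (w - c' - ε) 3 (b + 1) ++
        seg (u + c' - ε + 3) 2 c ++ [w] ++ seg (w - c') 3 b ++ [u + c'] ++ seg u 2 c ++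
        seg (w - c' + ε - 3) 3 (b + 1) ++ seg (u + c' + ε) 2 a ++ [w - 1]) →
        u ≤ z ∧ z ≤ w := by
      intro z hz
      simp only [List.append_assoc, List.mem_append, seg_mem_two, seg_mem_three,
        List.mem_singleton] at hz
      omega
    have hlen : (seg (u + 1) 2 a ++ seg (w - c' - ε) 3 (b + 1) ++ seg (u + c' - ε + 3) 2 c ++
        [w] ++ seg (w - c') 3 b ++ [u + c'] ++ seg u 2 c ++
        seg (w - c' + ε - 3) 3 (b + 1) ++ seg (u + c' + ε) 2 a ++ [w - 1]).length
        = (w - u + 1).toNat := by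
      simp only [List.length_append, seg_length, List.length_singleton]
      omega
    have hsub : (seg (u + 1) 2 a ++ seg (w - c' - ε) 3 (b + 1) ++ seg (u + c' - ε + 3) 2 c ++
        [w] ++ seg (w - c') 3 b ++ [u + c'] ++ seg u 2 c ++
        seg (w - c' + ε - 3) 3 (b + 1) ++ seg (u + c' + ε) 2 a ++ [w - 1]).toFinset ⊆
        Finset.Icc u w := by
      intro x hx
      rw [List.mem_toFinset] at hx
      rw [Finset.mem_Icc]
      exact hfwd x hx
    have hcard : (Finset.Icc u w).card ≤
        (seg (u + 1) 2 a ++ seg (w - c' - ε) 3 (b + 1) ++ seg (u + c' - ε + 3) 2 c ++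
        [w] ++ seg (w - c') 3 b ++ [u + c'] ++ seg u 2 c ++
        seg (w - c' + ε - 3) 3 (b + 1) ++ seg (u + c' + ε) 2 a ++ [w - 1]).toFinset.card := by
      rw [List.toFinset_card_of_nodup hnd, hlen, Int.card_Icc]
      omega
    have heq := Finset.eq_of_subset_of_card_le hsub hcard
    intro z
    constructor
    · exact hfwd z
    · rintro ⟨hz1, hz2⟩
      have hz : z ∈ Finset.Icc u w := Finset.mem_Icc.mpr ⟨hz1, hz2⟩
      rw [← heq] at hz
      exact List.mem_toFinset.mp hz
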